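/- For p ∈ S^{m-1}, ρ ∈ [0,π/2), and linearly independent unit vectors a_1,...,a_m ∈ ∂cap(p,ρ), the condition 0 ∈ conv(π_p a_1,...,π_p a_m) is equivalent to p ∈ cone(a_1,...,a_m). -/

import Mathlib

open Real Set
open scoped RealInnerProductSpace

theorem stmt7 {m : ℕ} (hm : 0 < m)
    (a : Fin m → EuclideanSpace ℝ (Fin m)) (ha : ∀ i, ‖a i‖ = 1)
    (hindep : LinearIndependent ℝ a)
    (p : EuclideanSpace ℝ (Fin m)) (hp : ‖p‖ = 1) (ρ : ℝ)
    (hρ0 : 0 ≤ ρ) (hρ : ρ < π / 2)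
    (hbd : ∀ i, ⟪a i, p⟫ = Real.cos ρ) :
    ((0 : EuclideanSpace ℝ (Fin m)) ∈ convexHull ℝ
        (Set.range fun i =>
          ((Submodule.orthogonalProjectionOnto (ℝ ∙ p)ᗮ (a i) : (ℝ ∙ p)ᗮ) : EuclideanSpace ℝ (Fin m)))
      ↔ ∃ c : Fin m → ℝ, (∀ i, 0 ≤ c i) ∧ p = ∑ i, c i • a i) := by
  set k := Real.cos ρ with hk
  have hkpos : 0 < k := Real.cos_pos_of_mem_Ioo ⟨by linarith [Real.pi_pos], hρ⟩
  have hv : ∀ i, ((Submodule.orthogonalProjectionOnto (ℝ ∙ p)ᗮ (a i) : (ℝ ∙ p)ᗮ) :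
      EuclideanSpace ℝ (Fin m)) = a i - k • p := by
    intro i
    rw [Submodule.orthogonalProjectionOnto_orthogonal, Submodule.coe_mk, Submodule.starProjection_singleton,
      real_inner_comm, hbd i, hp]
    norm_num
  rw [convexHull_range_eq_exists_affineCombination]
  constructor
  · rintro ⟨s, w, hw0, hw1, hwc⟩
    rw [Finset.affineCombination_eq_linear_combination _ _ _ hw1] at hwc
    refine ⟨fun i => if i ∈ s then w i / k else 0, fun i => ?_, ?_⟩
    · by_cases h : i ∈ s
      · simpa [h] using div_nonneg (hw0 i h) hkpos.le
      · simp [h]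
    have h1 : ∑ i ∈ s, w i • (a i - k • p) = 0 := by
      rw [← hwc]; exact Finset.sum_congr rfl fun i _ => by rw [hv i]
    have h2 : ∑ i ∈ s, w i • a i = k • p := by
      simp only [smul_sub, Finset.sum_sub_distrib, sub_eq_zero] at h1
      rw [h1, ← Finset.sum_smul, hw1, one_smul]
    have : ∑ i : Fin m, (if i ∈ s then w i / k else 0) • a i
        = ∑ i ∈ s, (w i / k) • a i := by
      simp only [ite_smul, zero_smul]
      rw [← Finset.sum_filter]
      congr 1
      simp [Finset.filter_mem_eq_inter]
    rw [this]
    have : ∑ i ∈ s, (w i / k) • a i = p := by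
      rw [show (fun i => (w i / k) • a i) = fun i => k⁻¹ • (w i • a i) by
        funext i; rw [smul_smul]; ring_nf, ← Finset.smul_sum, h2, smul_smul,
        inv_mul_cancel₀ hkpos.ne', one_smul]
    rw [this]
  · rintro ⟨c, hc0, hcp⟩
    have hsum : ∑ i : Fin m, k * c i = 1 := by
      have h1 := congrArg (fun x => ⟪x, p⟫) hcp
      simp only [sum_inner, real_inner_smul_left, hbd] at h1
      rw [real_inner_self_eq_norm_sq, hp] at h1
      norm_num at h1
      rw [h1]
      exact Finset.sum_congr rfl fun i _ => mul_comm _ _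
    refine ⟨Finset.univ, fun i => k * c i,
      fun i _ => mul_nonneg hkpos.le (hc0 i), hsum, ?_⟩
    rw [Finset.affineCombination_eq_linear_combination _ _ _ hsum]
    have : ∑ i : Fin m, (k * c i) • ((Submodule.orthogonalProjectionOnto (ℝ ∙ p)ᗮ (a i) : (ℝ ∙ p)ᗮ) :
        EuclideanSpace ℝ (Fin m)) = ∑ i : Fin m, (k * c i) • (a i - k • p) :=
      Finset.sum_congr rfl fun i _ => by rw [hv i]
    rw [this]
    have h3 : ∑ i : Fin m, (k * c i) • a i = k • p := by
      conv_rhs => rw [hcp, Finset.smul_sum]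
      exact Finset.sum_congr rfl fun i _ => by rw [smul_smul]
    simp only [smul_sub, Finset.sum_sub_distrib, h3, ← Finset.sum_smul, hsum, one_smul,
      sub_self]
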